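/- Let f : X → Y be a function between sets and φ : X → Σ. Define ∀_f φ : Y → Σ by (∀_f φ y)₁ = { a ∈ ℕ : for all x ∈ f⁻¹(y) and all b ∈ ℕ, a · b is defined and a · b ∈ !(φ x)₁ } and (∀_f φ y)₀ = ↑_{!(∀_f φ y)₁} { ⟨a⟩ : a ∈ (∀_f φ y)₁ and for all x ∈ f⁻¹(y) and all b ∈ ℕ, a · b ∈ (φ x)₀ }. Then ∀_f φ y is an element of Σ for every y ∈ Y, and for every χ : Y → Σ one has χ ∘ f ≤ φ if and only if χ ≤ ∀_f φ. -/

import Mathlib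

open CategoryTheory Encodable Denumerable

namespace Herbrand

/-- Kleene application in Kleene's first pca `K₁`: `e · n`. -/
def kap (e n : ℕ) : Part ℕ := Nat.Partrec.Code.eval (ofNat Nat.Partrec.Code e) n

/-- `kapIn r n S` : `r · n` is defined and its value lies in `S`. -/
def kapIn (r n : ℕ) (S : Set ℕ) : Prop := ∃ v ∈ kap r n, v ∈ S

/-- The list coded by a natural number (canonical bijection `ℕ ≃ List ℕ`). -/
def toL (n : ℕ) : List ℕ := ofNat (List ℕ) n

/-- The code of a list of natural numbers. -/
def ofL (l : List ℕ) : ℕ := encode l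

@[simp] lemma toL_ofL (l : List ℕ) : toL (ofL l) = l := ofNat_encode l

/-- `!A` : the set of codes of lists all of whose entries lie in `A`. -/
def bang (A : Set ℕ) : Set ℕ := {n | ∀ x ∈ toL n, x ∈ A}

/-- `m ⪯ n` : every entry of the list coded by `m` is an entry of the list coded by `n`. -/
def sle (m n : ℕ) : Prop := ∀ x ∈ toL m, x ∈ toL n

lemma sle_refl (m : ℕ) : sle m m := fun _ hx => hx

lemma sle_trans {m n k : ℕ} (h1 : sle m n) (h2 : sle n k) : sle m k :=
  fun x hx => h2 x (h1 x hx)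

/-- `S` is upward closed in `!A`. -/
def UpwardClosedIn (A S : Set ℕ) : Prop :=
  ∀ m ∈ S, ∀ n ∈ bang A, sle m n → n ∈ S

/-- `↑_{!A} S` : the set of `n ∈ !A` with `m ⪯ n` for some `m ∈ S`. -/
def upClo (A S : Set ℕ) : Set ℕ := {n | n ∈ bang A ∧ ∃ m ∈ S, sle m n}

lemma mem_bang_univ (n : ℕ) : n ∈ bang Set.univ := fun x _ => Set.mem_univ x

/-- From a partial recursive function we get a `K₁`-code for it. -/
theorem exists_kap_eq {f : ℕ →. ℕ} (hf : Nat.Partrec f) : ∃ e, ∀ n, kap e n = f n := by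
  obtain ⟨c, hc⟩ := Nat.Partrec.Code.exists_code.mp hf
  exact ⟨encode c, fun n => by simp [kap, hc]⟩


/-- A pair of sets of numbers: candidate Herbrand truth value `(X₀, X₁)`. -/
structure HPair where
  act : Set ℕ
  pot : Set ℕ

/-- `X` is a Herbrand truth value (an element of `Σ`): `X₀ ⊆ !X₁` and
`X₀` is upward closed in `!X₁`. -/
def HPair.IsSigma (X : HPair) : Prop :=
  X.act ⊆ bang X.pot ∧ UpwardClosedIn X.pot X.act

/-- The preorder on `X → Σ` of the Herbrand tripos. -/
def hle {X : Type} (φ ψ : X → HPair) : Prop :=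
  ∃ r : ℕ, ∀ x : X, ∀ n : ℕ,
    (n ∈ bang (φ x).pot → kapIn r n (bang (ψ x).pot)) ∧
    (n ∈ (φ x).act → kapIn r n (ψ x).act)

/-- `A & B = {Nat.pair 0 a : a ∈ A} ∪ {Nat.pair 1 b : b ∈ B}`. -/
def amp (A B : Set ℕ) : Set ℕ :=
  (fun a => Nat.pair 0 a) '' A ∪ (fun b => Nat.pair 1 b) '' B

/-- `m_A`: the code of the list of all `a` with `Nat.pair 0 a` an entry of the list coded
by `m`. -/
def projL (m : ℕ) : ℕ :=
  ofL ((toL m).filterMap fun p => if p.unpair.1 = 0 then some p.unpair.2 else none)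

/-- `m_B`: the code of the list of all `b` with `Nat.pair 1 b` an entry of the list coded
by `m`. -/
def projR (m : ℕ) : ℕ :=
  ofL ((toL m).filterMap fun p => if p.unpair.1 = 1 then some p.unpair.2 else none)

/-- Conjunction of Herbrand truth values. -/
def conj (A B : HPair) : HPair where
  act := {m | m ∈ bang (amp A.pot B.pot) ∧ projL m ∈ A.act ∧ projR m ∈ B.act}
  pot := amp A.pot B.pot

/-- Disjunction of Herbrand truth values. -/
def disj (A B : HPair) : HPair where
  act := {m | m ∈ bang (amp A.pot B.pot) ∧ (projL m ∈ A.act ∨ projR m ∈ B.act)}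
  pot := amp A.pot B.pot

/-- The potential realizers of an implication. -/
def implPot (A B : HPair) : Set ℕ := {c | ∀ m ∈ bang A.pot, kapIn c m (bang B.pot)}

/-- Implication of Herbrand truth values. -/
def impl (A B : HPair) : HPair where
  act := upClo (implPot A B)
    {n | ∃ c, n = ofL [c] ∧ c ∈ implPot A B ∧ ∀ m ∈ A.act, kapIn c m B.act}
  pot := implPot A B

/-- The bottom Herbrand truth value `(∅, ∅)`. -/
def bot : HPair := ⟨∅, ∅⟩

/-- Negation of Herbrand truth values: `¬A = A → (∅, ∅)`. -/
def neg (A : HPair) : HPair := impl A bot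


/-- The potential realizers of `∀_f φ y`. -/
def hforallPot {X Y : Type} (f : X → Y) (φ : X → HPair) (y : Y) : Set ℕ :=
  {a | ∀ x, f x = y → ∀ b : ℕ, kapIn a b (bang (φ x).pot)}

/-- The universal quantifier `∀_f φ` along `f : X → Y`. -/
def hforall {X Y : Type} (f : X → Y) (φ : X → HPair) (y : Y) : HPair where
  act := upClo (hforallPot f φ y)
    {m | ∃ a, m = ofL [a] ∧ a ∈ hforallPot f φ y ∧
      ∀ x, f x = y → ∀ b : ℕ, kapIn a b ((φ x).act)}
  pot := hforallPot f φ y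

open Nat.Partrec (Code) in
lemma kap_encode (c : Nat.Partrec.Code) (n : ℕ) : kap (encode c) n = c.eval n := by
  simp [kap, ofNat_encode]

lemma ofL_toL (n : ℕ) : ofL (toL n) = n := Denumerable.encode_ofNat n

lemma kapPartrec : Partrec₂ kap :=
  Nat.Partrec.Code.eval_part.comp ((Computable.ofNat _).comp Computable.fst)
    Computable.snd

open Nat.Partrec (Code) in
/-- `constCode r n` : a code of the function `b ↦ r · n`. -/
def constCode (r n : ℕ) : ℕ :=
  encode (Code.curry (Code.comp (ofNat Code r) Code.left) n)

lemma kap_constCode (r n b : ℕ) : kap (constCode r n) b = kap r n := by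
  simp [constCode, kap_encode, Nat.Partrec.Code.eval_curry, Nat.Partrec.Code.eval, kap]
  exact Part.bind_some _ _

open Nat.Partrec (Code) in
lemma constCode_primrec (r : ℕ) : Primrec (fun n => ofL [constCode r n]) :=
  Primrec.encode.comp <| Primrec.list_cons.comp
    (Primrec.encode.comp <| Nat.Partrec.Code.primrec₂_curry.comp
      (Primrec.const (Code.comp (ofNat Code r) Code.left)) Primrec.id)
    (Primrec.const [])

/-- One step of the "map `kap · 0` over a coded list and concatenate" machine. -/
def step (p : ℕ × ℕ) : Part (ℕ ⊕ ℕ × ℕ) :=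
  (kap (if toL p.1 = [] then encode Nat.Partrec.Code.zero else (toL p.1).headI) 0).map
    fun c =>
      if toL p.1 = [] then Sum.inl p.2
      else Sum.inr (ofL (toL p.1).tail, ofL (toL p.2 ++ toL c))

lemma step_partrec : Partrec step := by
  have htoL1 : Primrec (fun p : ℕ × ℕ => toL p.1) := (Primrec.ofNat _).comp Primrec.fst
  have hnil : PrimrecPred (fun p : ℕ × ℕ => toL p.1 = []) :=
    PrimrecRel.comp Primrec.eq htoL1 (Primrec.const [])
  have hhd : Computable (fun p : ℕ × ℕ =>
      if toL p.1 = [] then encode Nat.Partrec.Code.zero else (toL p.1).headI) :=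
    (Primrec.ite hnil (Primrec.const _) (Primrec.list_headI.comp htoL1)).to_comp
  have hg : Computable₂ (fun (p : ℕ × ℕ) (c : ℕ) =>
      if toL p.1 = [] then Sum.inl p.2
      else Sum.inr (ofL (toL p.1).tail, ofL (toL p.2 ++ toL c)) : ℕ × ℕ → ℕ → ℕ ⊕ ℕ × ℕ) := by
    have h1 : Primrec (fun q : (ℕ × ℕ) × ℕ => toL q.1.1) :=
      (Primrec.ofNat _).comp (Primrec.fst.comp Primrec.fst)
    have h2 : Primrec (fun q : (ℕ × ℕ) × ℕ =>
        if toL q.1.1 = [] then (Sum.inl q.1.2 : ℕ ⊕ ℕ × ℕ)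
        else Sum.inr (ofL (toL q.1.1).tail, ofL (toL q.1.2 ++ toL q.2))) :=
      Primrec.ite (PrimrecRel.comp Primrec.eq h1 (Primrec.const []))
        (Primrec.sumInl.comp (Primrec.snd.comp Primrec.fst))
        (Primrec.sumInr.comp (Primrec.pair
          (Primrec.encode.comp (Primrec.list_tail.comp h1))
          (Primrec.encode.comp (Primrec.list_append.comp
            ((Primrec.ofNat _).comp (Primrec.snd.comp Primrec.fst))
            ((Primrec.ofNat _).comp Primrec.snd)))))
    exact h2.to₂.to_comp
  exact Partrec.map (kapPartrec.comp hhd (Computable.const 0)) hg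

lemma step_nil {p : ℕ × ℕ} (h : toL p.1 = []) : step p = Part.some (Sum.inl p.2) := by
  have : kap (encode Nat.Partrec.Code.zero) 0 = Part.some 0 := by
    rw [kap_encode]; rfl
  simp [step, h, this]

lemma step_cons {p : ℕ × ℕ} {a : ℕ} {t : List ℕ} (h : toL p.1 = a :: t) :
    step p = (kap a 0).map fun c => Sum.inr (ofL t, ofL (toL p.2 ++ toL c)) := by
  simp [step, h]

lemma fix_spec (l : List ℕ) : ∀ acc : ℕ, (∀ a ∈ l, (kap a 0).Dom) →
    ∃ w ∈ PFun.fix step (ofL l, acc),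
      (∀ x ∈ toL w, x ∈ toL acc ∨ ∃ a ∈ l, ∃ c ∈ kap a 0, x ∈ toL c) ∧
      (∀ x ∈ toL acc, x ∈ toL w) ∧
      (∀ a ∈ l, ∀ c ∈ kap a 0, ∀ x ∈ toL c, x ∈ toL w) := by
  induction l with
  | nil =>
    intro acc _
    refine ⟨acc, PFun.fix_stop ?_, fun x hx => Or.inl hx, fun x hx => hx, by simp⟩
    rw [step_nil (toL_ofL ([] : List ℕ))]
    exact Part.mem_some _
  | cons a t ih =>
    intro acc hdom
    obtain ⟨c, hc⟩ := Part.dom_iff_mem.mp (hdom a (List.mem_cons_self))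
    obtain ⟨w, hw, hw1, hw2, hw3⟩ := ih (ofL (toL acc ++ toL c))
      (fun b hb => hdom b (List.mem_cons_of_mem _ hb))
    have hstep : Sum.inr ((ofL t, ofL (toL acc ++ toL c)) : ℕ × ℕ) ∈
        step (ofL (a :: t), acc) := by
      rw [step_cons (toL_ofL (a :: t))]
      exact Part.mem_map _ hc
    have hacc : ∀ x ∈ toL (ofL (toL acc ++ toL c)), x ∈ toL acc ∨ x ∈ toL c := by
      intro x hx; rw [toL_ofL] at hx; simpa using hx
    refine ⟨w, ?_, ?_, ?_, ?_⟩
    · rw [PFun.fix_fwd_eq hstep]; exact hw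
    · intro x hx
      rcases hw1 x hx with h | ⟨a', ha', c', hc', hx'⟩
      · rcases hacc x h with h' | h'
        · exact Or.inl h'
        · exact Or.inr ⟨a, List.mem_cons_self, c, hc, h'⟩
      · exact Or.inr ⟨a', List.mem_cons_of_mem _ ha', c', hc', hx'⟩
    · intro x hx
      exact hw2 x (by rw [toL_ofL]; exact List.mem_append_left _ hx)
    · intro a' ha' c' hc' x hx
      rcases List.mem_cons.mp ha' with rfl | ha'
      · have : c' = c := Part.mem_unique hc' hc
        subst this
        exact hw2 x (by rw [toL_ofL]; exact List.mem_append_right _ hx)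
      · exact hw3 a' ha' c' hc' x hx

/-- `∀_f φ y` lands in `Σ` and `∀_f` is right adjoint to reindexing. -/
theorem hforall_isSigma_and_adjoint {X Y : Type} (f : X → Y) (φ : X → HPair)
    (hφ : ∀ x, (φ x).IsSigma) :
    (∀ y, (hforall f φ y).IsSigma) ∧
    ∀ χ : Y → HPair, (∀ y, (χ y).IsSigma) →
      (hle (χ ∘ f) φ ↔ hle χ (hforall f φ)) := by
  constructor
  · intro y
    exact ⟨fun m hm => hm.1, fun m hm n hn hmn =>
      ⟨hn, hm.2.imp fun a ha => ⟨ha.1, sle_trans ha.2 hmn⟩⟩⟩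
  · intro χ hχ
    constructor
    · rintro ⟨r, hr⟩
      obtain ⟨e, he⟩ := exists_kap_eq (Partrec.nat_iff.1 (constCode_primrec r).to_comp)
      have hpot : ∀ y n, n ∈ bang (χ y).pot → constCode r n ∈ hforallPot f φ y := by
        intro y n hn x hx b
        have := (hr x n).1 (show n ∈ bang (χ (f x)).pot by rw [hx]; exact hn)
        simpa [kapIn, kap_constCode] using this
      refine ⟨e, fun y n => ⟨fun hn => ?_, fun hn => ?_⟩⟩
      · refine ⟨ofL [constCode r n], by rw [he n]; exact Part.mem_some _, ?_⟩
        intro a ha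
        rw [toL_ofL] at ha
        simp only [List.mem_singleton] at ha
        subst ha
        exact hpot y n hn
      · refine ⟨ofL [constCode r n], by rw [he n]; exact Part.mem_some _, ?_⟩
        have hn' : n ∈ bang (χ y).pot := (hχ y).1 hn
        refine ⟨?_, ofL [constCode r n], ⟨constCode r n, rfl, hpot y n hn', ?_⟩, sle_refl _⟩
        · intro a ha
          rw [toL_ofL] at ha
          simp only [List.mem_singleton] at ha
          subst ha
          exact hpot y n hn'
        · intro x hx b
          have := (hr x n).2 (show n ∈ (χ (f x)).act by rw [hx]; exact hn)
          simpa [kapIn, kap_constCode] using this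
    · rintro ⟨s, hs⟩
      have hF : Partrec (fun n => (kap s n).bind fun v => PFun.fix step (v, ofL [])) := by
        refine (kapPartrec.comp (Computable.const s) Computable.id).bind ?_
        exact ((Partrec.fix step_partrec).comp
          (Computable.snd.pair (Computable.const (ofL [])))).to₂
      obtain ⟨e, he⟩ := exists_kap_eq (Partrec.nat_iff.1 hF)
      -- common construction: from `v ∈ !(hforallPot f φ (f x))` get `w`
      have main : ∀ (x : X) (v : ℕ), v ∈ bang (hforallPot f φ (f x)) →
          ∃ w ∈ PFun.fix step (v, ofL []),
            w ∈ bang (φ x).pot ∧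
            (∀ a ∈ toL v, ∀ c ∈ kap a 0, ∀ z ∈ toL c, z ∈ toL w) := by
        intro x v hv
        have hdom : ∀ a ∈ toL v, (kap a 0).Dom := by
          intro a ha
          obtain ⟨c, hc, -⟩ := hv a ha x rfl 0
          exact Part.dom_iff_mem.mpr ⟨c, hc⟩
        obtain ⟨w, hw, hw1, -, hw3⟩ := fix_spec (toL v) (ofL []) hdom
        rw [ofL_toL] at hw
        refine ⟨w, hw, ?_, hw3⟩
        intro z hz
        rcases hw1 z hz with h | ⟨a, ha, c, hc, hz'⟩
        · rw [toL_ofL] at h; simp at h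
        · obtain ⟨c', hc', hcb⟩ := hv a ha x rfl 0
          have : c' = c := Part.mem_unique hc' hc
          subst this
          exact hcb z hz'
      refine ⟨e, fun x n => ⟨fun hn => ?_, fun hn => ?_⟩⟩
      · obtain ⟨v, hv, hvb⟩ := (hs (f x) n).1 hn
        obtain ⟨w, hw, hwb, -⟩ := main x v hvb
        exact ⟨w, by rw [he n]; exact Part.mem_bind_iff.mpr ⟨v, hv, hw⟩, hwb⟩
      · obtain ⟨v, hv, hvb, m, hmS, hmv⟩ := (hs (f x) n).2 hn
        obtain ⟨a, rfl, -, haact⟩ := hmS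
        obtain ⟨w, hw, hwb, hw3⟩ := main x v hvb
        refine ⟨w, by rw [he n]; exact Part.mem_bind_iff.mpr ⟨v, hv, hw⟩, ?_⟩
        have hav : a ∈ toL v := hmv a (by rw [toL_ofL]; exact List.mem_singleton_self a)
        obtain ⟨c, hc, hcact⟩ := haact x rfl 0
        exact (hφ x).2 c hcact w hwb (fun z hz => hw3 a hav c hc z hz)

end Herbrand
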